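/- Let λ > 0 be real and τ = t + iθ with t real and θ ∈ (−π, π). Then the Möbius transformation determined by T(λ,τ) maps the circle C₁ = {z ∈ ℂ : |z − i·tanh(λ/2)·tan(θ/2)| = tanh(λ/2)·sec(θ/2)} into the circle C₂ = {z ∈ ℂ : |z + i·coth(λ/2)·tan(θ/2)| = coth(λ/2)·sec(θ/2)}: for every z ∈ C₁ not equal to the pole of T(λ,τ), the point T(λ,τ)·z lies on C₂. -/

import Mathlib

open Matrix

/-- `T(λ,τ) = [[cosh(τ/2)·coth(λ/2), −sinh(τ/2)], [−sinh(τ/2), cosh(τ/2)·tanh(λ/2)]]` -/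
noncomputable def Tmat (l τ : ℂ) : Matrix (Fin 2) (Fin 2) ℂ :=
  !![Complex.cosh (τ/2) * (Complex.cosh (l/2) / Complex.sinh (l/2)), -Complex.sinh (τ/2);
     -Complex.sinh (τ/2), Complex.cosh (τ/2) * (Complex.sinh (l/2) / Complex.cosh (l/2))]

private lemma abs_eq_of_mul_conj' {u : ℂ} {r : ℝ} (hr : 0 ≤ r)
    (h : u * (starRingEnd ℂ) u = (r:ℂ)^2) : ‖u‖ = r := by
  have h2 : Complex.normSq u = r^2 := by
    exact_mod_cast (Complex.mul_conj u).symm.trans h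
  rw [Complex.norm_def, h2, Real.sqrt_sq hr]

set_option maxHeartbeats 1000000 in
theorem T_maps_circle_to_circle (l t θ : ℝ) (hl : 0 < l) (hθ : θ ∈ Set.Ioo (-Real.pi) Real.pi)
    (z : ℂ)
    (hz : ‖z - Complex.I * (Real.tanh (l/2) * Real.tan (θ/2))‖ =
      Real.tanh (l/2) * (1 / Real.cos (θ/2)))
    (hpole : Tmat l ((t : ℂ) + θ * Complex.I) 1 0 * z +
      Tmat l ((t : ℂ) + θ * Complex.I) 1 1 ≠ 0) :
    ‖(Tmat l ((t : ℂ) + θ * Complex.I) 0 0 * z + Tmat l ((t : ℂ) + θ * Complex.I) 0 1) /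
            (Tmat l ((t : ℂ) + θ * Complex.I) 1 0 * z + Tmat l ((t : ℂ) + θ * Complex.I) 1 1) +
          Complex.I * ((Real.cosh (l/2) / Real.sinh (l/2)) * Real.tan (θ/2))‖ =
      (Real.cosh (l/2) / Real.sinh (l/2)) * (1 / Real.cos (θ/2)) := by
  obtain ⟨hθ1, hθ2⟩ := hθ
  set c1 := Real.cosh (t/2) with hc1def
  set s1 := Real.sinh (t/2) with hs1def
  set c2 := Real.cos (θ/2) with hc2def
  set s2 := Real.sin (θ/2) with hs2def
  set ch := Real.cosh (l/2) with hchdef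
  set sh := Real.sinh (l/2) with hshdef
  have hshpos : 0 < sh := Real.sinh_pos_iff.2 (by linarith)
  have hchpos : 0 < ch := Real.cosh_pos _
  have hc2pos : 0 < c2 := Real.cos_pos_of_mem_Ioo ⟨by linarith, by linarith⟩
  have hsh0 : (sh:ℂ) ≠ 0 := Complex.ofReal_ne_zero.2 hshpos.ne'
  have hch0 : (ch:ℂ) ≠ 0 := Complex.ofReal_ne_zero.2 hchpos.ne'
  have hc20 : (c2:ℂ) ≠ 0 := Complex.ofReal_ne_zero.2 hc2pos.ne'
  have htanh : Real.tanh (l/2) = sh/ch := Real.tanh_eq_sinh_div_cosh _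
  have htan : Real.tan (θ/2) = s2/c2 := Real.tan_eq_sin_div_cos _
  have h1 : ((c1:ℂ))^2 - (s1:ℂ)^2 = 1 := by
    have := Real.cosh_sq_sub_sinh_sq (t/2); exact_mod_cast congrArg (Complex.ofReal) this
  have h2 : ((s2:ℂ))^2 + (c2:ℂ)^2 = 1 := by
    have := Real.sin_sq_add_cos_sq (θ/2); exact_mod_cast congrArg (Complex.ofReal) this
  have hI : Complex.I^2 = -1 := Complex.I_sq
  have hC : Complex.cosh (((t:ℂ) + θ*Complex.I)/2)
      = (c1:ℂ)*c2 + (s1:ℂ)*((s2:ℂ)*Complex.I) := by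
    have e : ((t:ℂ) + θ*Complex.I)/2 = ((t/2:ℝ):ℂ) + ((θ/2:ℝ):ℂ)*Complex.I := by push_cast; ring
    rw [e, Complex.cosh_add, Complex.cosh_mul_I, Complex.sinh_mul_I,
      Complex.ofReal_cosh, Complex.ofReal_sinh, Complex.ofReal_cos, Complex.ofReal_sin]
  have hS : Complex.sinh (((t:ℂ) + θ*Complex.I)/2)
      = (s1:ℂ)*c2 + (c1:ℂ)*((s2:ℂ)*Complex.I) := by
    have e : ((t:ℂ) + θ*Complex.I)/2 = ((t/2:ℝ):ℂ) + ((θ/2:ℝ):ℂ)*Complex.I := by push_cast; ring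
    rw [e, Complex.sinh_add, Complex.cosh_mul_I, Complex.sinh_mul_I,
      Complex.ofReal_cosh, Complex.ofReal_sinh, Complex.ofReal_cos, Complex.ofReal_sin]
  have hch' : Complex.cosh ((l:ℂ)/2) = (ch:ℂ) := by
    rw [show ((l:ℂ)/2) = ((l/2:ℝ):ℂ) by push_cast; ring, Complex.ofReal_cosh]
  have hsh' : Complex.sinh ((l:ℂ)/2) = (sh:ℂ) := by
    rw [show ((l:ℂ)/2) = ((l/2:ℝ):ℂ) by push_cast; ring, Complex.ofReal_sinh]
  set w := (starRingEnd ℂ) z with hwdef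
  -- the circle hypothesis as a complex product equation
  have habs2 : (z - Complex.I * ((Real.tanh (l/2) : ℂ) * (Real.tan (θ/2) : ℂ))) *
      (starRingEnd ℂ) (z - Complex.I * ((Real.tanh (l/2) : ℂ) * (Real.tan (θ/2) : ℂ)))
      = ((Real.tanh (l/2) * (1/c2) : ℝ) : ℂ)^2 := by
    rw [Complex.mul_conj]
    norm_cast
    rw [← Complex.sq_norm]
    congr 1
    exact_mod_cast hz
  have hQ : ((ch:ℂ)*c2*z - Complex.I*sh*s2) * ((ch:ℂ)*c2*w + Complex.I*sh*s2)
      = ((sh:ℂ))^2 := by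
    rw [htanh, htan] at habs2
    simp only [map_sub, _root_.map_mul, map_div₀, Complex.conj_I, Complex.conj_ofReal] at habs2
    push_cast at habs2
    field_simp at habs2
    rw [← hwdef] at habs2
    refine mul_left_cancel₀ (pow_ne_zero 2 (mul_ne_zero hch0 hc20)) ?_
    linear_combination ((ch:ℂ)*c2)^2 * habs2
  -- key polynomial identity
  set A : ℂ := (c1:ℂ)*c2 + (s1:ℂ)*((s2:ℂ)*Complex.I) with hAdef
  set B : ℂ := (s1:ℂ)*c2 + (c1:ℂ)*((s2:ℂ)*Complex.I) with hBdef
  set Ac : ℂ := (c1:ℂ)*c2 - (s1:ℂ)*((s2:ℂ)*Complex.I) with hAcdef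
  set Bc : ℂ := (s1:ℂ)*c2 - (c1:ℂ)*((s2:ℂ)*Complex.I) with hBcdef
  set Mn : ℂ := -(B*z*(ch:ℂ)) + A*(sh:ℂ) with hMndef
  set Mc : ℂ := -(Bc*w*(ch:ℂ)) + Ac*(sh:ℂ) with hMcdef
  set P1 : ℂ := (c2:ℂ)*(A*(ch:ℂ)*z - B*(sh:ℂ)) + Complex.I*(s2:ℂ)*Mn with hP1def
  set P2 : ℂ := (c2:ℂ)*(Ac*(ch:ℂ)*w - Bc*(sh:ℂ)) - Complex.I*(s2:ℂ)*Mc with hP2def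
  have key : P1 * P2 = Mn * Mc := by
    rw [hP1def, hP2def, hMndef, hMcdef, hAdef, hBdef, hAcdef, hBcdef]
    linear_combination hQ + (-1*(c2:ℂ)^2*(sh:ℂ)^2 + -1*w*(c2:ℂ)*(s2:ℂ)*(ch:ℂ)*(sh:ℂ)*Complex.I + 1*z*(c2:ℂ)*(s2:ℂ)*(ch:ℂ)*(sh:ℂ)*Complex.I + -1*z*w*(s2:ℂ)^2*(ch:ℂ)^2 + 1*z*w*(s2:ℂ)^4*(ch:ℂ)^2 + 2*z*w*(c2:ℂ)^2*(s2:ℂ)^2*(ch:ℂ)^2 + 1*z*w*(c2:ℂ)^4*(ch:ℂ)^2) * h1 + (-1*(sh:ℂ)^2 + 1*(s1:ℂ)^2*(s2:ℂ)^2*(sh:ℂ)^2 + 1*(s1:ℂ)^2*(c2:ℂ)^2*(sh:ℂ)^2 + -1*w*(c1:ℂ)*(s1:ℂ)*(s2:ℂ)^2*(ch:ℂ)*(sh:ℂ) + -1*w*(c1:ℂ)*(s1:ℂ)*(c2:ℂ)^2*(ch:ℂ)*(sh:ℂ) + -1*z*(c1:ℂ)*(s1:ℂ)*(s2:ℂ)^2*(ch:ℂ)*(sh:ℂ)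 + -1*z*(c1:ℂ)*(s1:ℂ)*(c2:ℂ)^2*(ch:ℂ)*(sh:ℂ) + 1*z*w*(s2:ℂ)^2*(ch:ℂ)^2 + 1*z*w*(c2:ℂ)^2*(ch:ℂ)^2 + 1*z*w*(s1:ℂ)^2*(s2:ℂ)^2*(ch:ℂ)^2 + 1*z*w*(s1:ℂ)^2*(c2:ℂ)^2*(ch:ℂ)^2) * h2 + (1*(s2:ℂ)^2*(sh:ℂ)^2 + 1*(s1:ℂ)^2*(s2:ℂ)^2*(sh:ℂ)^2 + -1*(s1:ℂ)^2*(s2:ℂ)^4*(sh:ℂ)^2 + 1*(s1:ℂ)^2*(s2:ℂ)^4*(sh:ℂ)^2*Complex.I^2 + -2*(s1:ℂ)^2*(c2:ℂ)^2*(s2:ℂ)^2*(sh:ℂ)^2 + -1*w*(c1:ℂ)*(s1:ℂ)*(s2:ℂ)^2*(ch:ℂ)*(sh:ℂ) + 1*w*(c1:ℂ)*(s1:ℂ)*(s2:ℂ)^4*(ch:ℂ)*(sh:ℂ) + -1*w*(c1:ℂ)*(s1:ℂ)*(s2:ℂ)^4*(ch:ℂ)*(sh:ℂ)*Complex.I^2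 + 2*w*(c1:ℂ)*(s1:ℂ)*(c2:ℂ)^2*(s2:ℂ)^2*(ch:ℂ)*(sh:ℂ) + -1*z*(c1:ℂ)*(s1:ℂ)*(s2:ℂ)^2*(ch:ℂ)*(sh:ℂ) + 1*z*(c1:ℂ)*(s1:ℂ)*(s2:ℂ)^4*(ch:ℂ)*(sh:ℂ) + -1*z*(c1:ℂ)*(s1:ℂ)*(s2:ℂ)^4*(ch:ℂ)*(sh:ℂ)*Complex.I^2 + 2*z*(c1:ℂ)*(s1:ℂ)*(c2:ℂ)^2*(s2:ℂ)^2*(ch:ℂ)*(sh:ℂ) + 1*z*w*(c1:ℂ)^2*(s2:ℂ)^2*(ch:ℂ)^2 + -1*z*w*(c1:ℂ)^2*(s2:ℂ)^4*(ch:ℂ)^2 + 1*z*w*(c1:ℂ)^2*(s2:ℂ)^4*(ch:ℂ)^2*Complex.I^2 + -2*z*w*(c1:ℂ)^2*(c2:ℂ)^2*(s2:ℂ)^2*(ch:ℂ)^2) * hI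
  -- rewrite the statement using the above
  have entry00 : Tmat l ((t : ℂ) + θ * Complex.I) 0 0 = A * ((ch:ℂ)/(sh:ℂ)) := by
    simp [Tmat, hC, hch', hsh', hAdef]
  have entry01 : Tmat l ((t : ℂ) + θ * Complex.I) 0 1 = -B := by
    simp [Tmat, hS, hBdef]
  have entry10 : Tmat l ((t : ℂ) + θ * Complex.I) 1 0 = -B := by
    simp [Tmat, hS, hBdef]
  have entry11 : Tmat l ((t : ℂ) + θ * Complex.I) 1 1 = A * ((sh:ℂ)/(ch:ℂ)) := by
    simp [Tmat, hC, hch', hsh', hAdef]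
  rw [entry10, entry11] at hpole
  rw [entry00, entry01, entry10, entry11]
  set D : ℂ := -B * z + A * ((sh:ℂ)/(ch:ℂ)) with hDdef
  have hD0 : D ≠ 0 := hpole
  have hMnD : Mn = (ch:ℂ) * D := by
    rw [hMndef, hDdef]; field_simp
  have hconjA : (starRingEnd ℂ) A = Ac := by
    rw [hAdef, hAcdef]; simp only [map_add, _root_.map_mul, Complex.conj_ofReal, Complex.conj_I]; ring
  have hconjB : (starRingEnd ℂ) B = Bc := by
    rw [hBdef, hBcdef]; simp only [map_add, _root_.map_mul, Complex.conj_ofReal, Complex.conj_I]; ring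
  have hDc : (starRingEnd ℂ) D = -Bc * w + Ac * ((sh:ℂ)/(ch:ℂ)) := by
    rw [hDdef]; simp only [map_add, map_neg, _root_.map_mul, map_div₀, Complex.conj_ofReal, hconjA, hconjB, ← hwdef]
  have hDc0 : (starRingEnd ℂ) D ≠ 0 := by
    rw [starRingEnd_apply]; exact star_ne_zero.mpr hD0
  have hMcD : Mc = (ch:ℂ) * (starRingEnd ℂ) D := by
    rw [hMcdef, hDc]; field_simp
  apply abs_eq_of_mul_conj'
  · positivity
  · have e1 : A * ((ch:ℂ)/(sh:ℂ)) * z + -B = (A*(ch:ℂ)*z - B*(sh:ℂ))/(sh:ℂ) := by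
      have e1' : (sh:ℂ) * (A * ((ch:ℂ)/(sh:ℂ)) * z + -B) = A*(ch:ℂ)*z - B*(sh:ℂ) := by
        field_simp; ring
      rw [eq_div_iff hsh0]; linear_combination e1'
    have e2 : Complex.I * ((ch:ℂ)/(sh:ℂ) * ((Real.tan (θ/2) : ℝ):ℂ))
        = (Complex.I*(ch:ℂ)*(s2:ℂ))/((sh:ℂ)*(c2:ℂ)) := by
      rw [htan]; push_cast; field_simp
    rw [e1, e2, div_div, div_add_div _ _ (mul_ne_zero hsh0 hD0) (mul_ne_zero hsh0 hc20)]
    have hu' : ((A*(ch:ℂ)*z - B*(sh:ℂ)) * ((sh:ℂ)*(c2:ℂ)) + (sh:ℂ)*D*(Complex.I*(ch:ℂ)*(s2:ℂ)))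
        / ((sh:ℂ)*D*((sh:ℂ)*(c2:ℂ))) = P1 / ((c2:ℂ) * (sh:ℂ) * D) := by
      rw [div_eq_div_iff (mul_ne_zero (mul_ne_zero hsh0 hD0) (mul_ne_zero hsh0 hc20))
        (mul_ne_zero (mul_ne_zero hc20 hsh0) hD0)]
      linear_combination (-(Complex.I*(s2:ℂ)*(sh:ℂ)^2*(c2:ℂ)*D)) * hMnD
        + (-((sh:ℂ)^2*(c2:ℂ)*D)) * hP1def
    rw [hu', map_div₀]
    have hP1c : (starRingEnd ℂ) P1 = P2 := by
      rw [hP1def, hP2def, hMndef, hMcdef]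
      simp only [map_add, map_sub, _root_.map_mul, map_neg, Complex.conj_I, Complex.conj_ofReal,
        hconjA, hconjB, ← hwdef]
      ring
    have hden : (starRingEnd ℂ) ((c2:ℂ) * (sh:ℂ) * D) = (c2:ℂ) * (sh:ℂ) * (starRingEnd ℂ) D := by
      simp only [_root_.map_mul, Complex.conj_ofReal]
    rw [hP1c, hden, div_mul_div_comm, key, hMnD, hMcD]
    have hr : ((ch/sh*(1/c2) : ℝ):ℂ)^2 = (ch:ℂ)^2/((sh:ℂ)^2*(c2:ℂ)^2) := by
      push_cast; field_simp
    rw [hr, div_eq_div_iff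
      (mul_ne_zero (mul_ne_zero (mul_ne_zero hc20 hsh0) hD0) (mul_ne_zero (mul_ne_zero hc20 hsh0) hDc0))
      (mul_ne_zero (pow_ne_zero 2 hsh0) (pow_ne_zero 2 hc20))]
    ring
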